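/- The map (a₂, a₃) ↦ (−a₂, i·a₃), where i² = −1, defines a k-algebra automorphism of k[x₁,x₂,x₃] carrying the ideal (x₁x₂ + x₃², x₁x₃, x₂² − αx₃² + x₁²) onto (x₁x₂ + x₃², x₁x₃, x₂² + αx₃² + x₁²); hence the algebras A^{1,α²}_{n,3,n+5} with parameters α and −α are isomorphic. -/

import Mathlib

open MvPolynomial

set_option maxHeartbeats 1000000 in
theorem stmt11 (k : Type*) [Field k] [IsAlgClosed k]
    (h2 : (2 : k) ≠ 0) (h3 : (3 : k) ≠ 0)
    (i : k) (hi : i ^ 2 = -1) (α : k) :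
    ∃ φ : MvPolynomial (Fin 3) k ≃ₐ[k] MvPolynomial (Fin 3) k,
      φ (X 0) = X 0 ∧ φ (X 1) = -X 1 ∧ φ (X 2) = C i * X 2 ∧
      Ideal.map (φ : MvPolynomial (Fin 3) k →+* MvPolynomial (Fin 3) k)
        (Ideal.span {X 0 * X 1 + X 2 ^ 2, X 0 * X 2,
          X 1 ^ 2 - C α * X 2 ^ 2 + X 0 ^ 2}) =
        Ideal.span {X 0 * X 1 + X 2 ^ 2, X 0 * X 2,
          X 1 ^ 2 + C α * X 2 ^ 2 + X 0 ^ 2} ∧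
      Nonempty
        ((MvPolynomial (Fin 3) k ⧸
            (Ideal.span {X 0 * X 1 + X 2 ^ 2, X 0 * X 2,
              X 1 ^ 2 - C α * X 2 ^ 2 + X 0 ^ 2} : Ideal (MvPolynomial (Fin 3) k))) ≃ₐ[k]
          (MvPolynomial (Fin 3) k ⧸
            (Ideal.span {X 0 * X 1 + X 2 ^ 2, X 0 * X 2,
              X 1 ^ 2 - C (-α) * X 2 ^ 2 + X 0 ^ 2} : Ideal (MvPolynomial (Fin 3) k)))) := by
  have hii : i * i = -1 := by rw [← sq]; exact hi
  -- forward and backward maps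
  set v : Fin 3 → MvPolynomial (Fin 3) k := ![X 0, -X 1, C i * X 2] with hv
  set w : Fin 3 → MvPolynomial (Fin 3) k := ![X 0, -X 1, C (-i) * X 2] with hw
  set f : MvPolynomial (Fin 3) k →ₐ[k] MvPolynomial (Fin 3) k := aeval v with hf
  set g : MvPolynomial (Fin 3) k →ₐ[k] MvPolynomial (Fin 3) k := aeval w with hg
  have hfg : f.comp g = AlgHom.id k _ := by
    apply MvPolynomial.algHom_ext
    intro j
    fin_cases j <;>
      simp [hf, hg, hv, hw, ← C_mul, hii, mul_comm, mul_assoc, mul_left_comm]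
  have hgf : g.comp f = AlgHom.id k _ := by
    apply MvPolynomial.algHom_ext
    intro j
    fin_cases j <;>
      simp [hf, hg, hv, hw, ← C_mul, hii, mul_comm, mul_assoc, mul_left_comm]
  set φ : MvPolynomial (Fin 3) k ≃ₐ[k] MvPolynomial (Fin 3) k :=
    AlgEquiv.ofAlgHom f g hfg hgf with hφ
  have hx0 : φ (X 0) = X 0 := by simp [hφ, hf, hv]
  have hx1 : φ (X 1) = -X 1 := by simp [hφ, hf, hv]
  have hx2 : φ (X 2) = C i * X 2 := by simp [hφ, hf, hv]
  have key : Ideal.map (φ : MvPolynomial (Fin 3) k →+* MvPolynomial (Fin 3) k)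
      (Ideal.span {X 0 * X 1 + X 2 ^ 2, X 0 * X 2,
        X 1 ^ 2 - C α * X 2 ^ 2 + X 0 ^ 2}) =
      Ideal.span {X 0 * X 1 + X 2 ^ 2, X 0 * X 2,
        X 1 ^ 2 + C α * X 2 ^ 2 + X 0 ^ 2} := by
    rw [Ideal.map_span]
    apply le_antisymm
    · rw [Ideal.span_le]
      rintro p ⟨q, hq, rfl⟩
      simp only [Set.mem_insert_iff, Set.mem_singleton_iff] at hq
      have hCi2 : (C i : MvPolynomial (Fin 3) k) ^ 2 = -1 := by
        rw [← C_pow, hi]; simp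
      rcases hq with rfl | rfl | rfl
      · have : (φ : MvPolynomial (Fin 3) k →+* MvPolynomial (Fin 3) k)
            (X 0 * X 1 + X 2 ^ 2) = -(X 0 * X 1 + X 2 ^ 2) := by
          simp only [map_add, map_mul, map_pow, RingHom.coe_coe, hx0, hx1, hx2]
          rw [mul_pow, hCi2]; ring
        rw [this]
        exact neg_mem (Ideal.subset_span (by simp))
      · have : (φ : MvPolynomial (Fin 3) k →+* MvPolynomial (Fin 3) k)
            (X 0 * X 2) = C i * (X 0 * X 2) := by
          simp only [map_mul, RingHom.coe_coe, hx0, hx2]; ring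
        rw [this]
        exact Ideal.mul_mem_left _ _ (Ideal.subset_span (by simp))
      · have : (φ : MvPolynomial (Fin 3) k →+* MvPolynomial (Fin 3) k)
            (X 1 ^ 2 - C α * X 2 ^ 2 + X 0 ^ 2) =
            X 1 ^ 2 + C α * X 2 ^ 2 + X 0 ^ 2 := by
          simp only [map_add, map_sub, map_mul, map_pow, RingHom.coe_coe, hx0, hx1, hx2,
            MvPolynomial.algebraMap_eq]
          have hc : (φ (C α) : MvPolynomial (Fin 3) k) = C α := by
            simp [hφ, hf]
          rw [hc, mul_pow, hCi2]
          ring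
        rw [this]
        exact Ideal.subset_span (by simp)
    · rw [Ideal.span_le]
      rintro p hp
      simp only [Set.mem_insert_iff, Set.mem_singleton_iff] at hp
      have hCi2 : (C i : MvPolynomial (Fin 3) k) ^ 2 = -1 := by
        rw [← C_pow, hi]; simp
      have mem : ∀ q ∈ ({X 0 * X 1 + X 2 ^ 2, X 0 * X 2,
          X 1 ^ 2 - C α * X 2 ^ 2 + X 0 ^ 2} : Set (MvPolynomial (Fin 3) k)),
          (φ : MvPolynomial (Fin 3) k →+* MvPolynomial (Fin 3) k) q ∈
          Ideal.span ((φ : MvPolynomial (Fin 3) k →+* MvPolynomial (Fin 3) k) ''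
            {X 0 * X 1 + X 2 ^ 2, X 0 * X 2, X 1 ^ 2 - C α * X 2 ^ 2 + X 0 ^ 2}) :=
        fun q hq => Ideal.subset_span ⟨q, hq, rfl⟩
      rcases hp with rfl | rfl | rfl
      · have h1 := mem (X 0 * X 1 + X 2 ^ 2) (by simp)
        have e : (φ : MvPolynomial (Fin 3) k →+* MvPolynomial (Fin 3) k)
            (X 0 * X 1 + X 2 ^ 2) = -(X 0 * X 1 + X 2 ^ 2) := by
          simp only [map_add, map_mul, map_pow, RingHom.coe_coe, hx0, hx1, hx2]
          rw [mul_pow, hCi2]; ring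
        rw [e] at h1
        simpa using neg_mem h1
      · have h1 := mem (X 0 * X 2) (by simp)
        have e : (φ : MvPolynomial (Fin 3) k →+* MvPolynomial (Fin 3) k)
            (X 0 * X 2) = C i * (X 0 * X 2) := by
          simp only [map_mul, RingHom.coe_coe, hx0, hx2]; ring
        rw [e] at h1
        have h2 := Ideal.mul_mem_left _ (C (-i)) h1
        have heq : C (-i) * (C i * ((X 0 : MvPolynomial (Fin 3) k) * X 2)) = X 0 * X 2 := by
          rw [← mul_assoc, ← C_mul]
          have h4 : -i * i = 1 := by rw [neg_mul, hii]; ring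
          rw [h4]; simp
        rw [heq] at h2; exact h2
      · have h1 := mem (X 1 ^ 2 - C α * X 2 ^ 2 + X 0 ^ 2) (by simp)
        have e : (φ : MvPolynomial (Fin 3) k →+* MvPolynomial (Fin 3) k)
            (X 1 ^ 2 - C α * X 2 ^ 2 + X 0 ^ 2) =
            X 1 ^ 2 + C α * X 2 ^ 2 + X 0 ^ 2 := by
          simp only [map_add, map_sub, map_mul, map_pow, RingHom.coe_coe, hx0, hx1, hx2]
          have hc : (φ (C α) : MvPolynomial (Fin 3) k) = C α := by
            simp [hφ, hf]
          rw [hc, mul_pow, hCi2]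
          ring
        rw [e] at h1
        exact h1
  refine ⟨φ, hx0, hx1, hx2, key, ?_⟩
  have htar : ({X 0 * X 1 + X 2 ^ 2, X 0 * X 2,
      X 1 ^ 2 - C (-α) * X 2 ^ 2 + X 0 ^ 2} : Set (MvPolynomial (Fin 3) k)) =
      {X 0 * X 1 + X 2 ^ 2, X 0 * X 2, X 1 ^ 2 + C α * X 2 ^ 2 + X 0 ^ 2} := by
    congr 2
    rw [map_neg]
    ring
  refine ⟨Ideal.quotientEquivAlg
    (Ideal.span {X 0 * X 1 + X 2 ^ 2, X 0 * X 2, X 1 ^ 2 - C α * X 2 ^ 2 + X 0 ^ 2})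
    (Ideal.span {X 0 * X 1 + X 2 ^ 2, X 0 * X 2, X 1 ^ 2 - C (-α) * X 2 ^ 2 + X 0 ^ 2})
    φ ?_⟩
  rw [htar]
  exact key.symm
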